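/- Let T be a self-adjoint operator on an n-dimensional real inner product space with eigenvalues λ₁ ≥ ... ≥ λₙ ≥ 0 and let Tₘ be its rank-m spectral truncation. For every linear operator A of rank at most m, ‖T - A‖ ≥ λ_{m+1} = ‖T - Tₘ‖, so Tₘ is a best rank-m approximation in operator norm. -/

import Mathlib

open RealInnerProductSpace

lemma ey_norm_sq {E : Type*} [NormedAddCommGroup E] [InnerProductSpace ℝ E]
    {ι : Type*} [Fintype ι] {v : ι → E} (hv : Orthonormal ℝ v) (c : ι → ℝ) :
    ‖∑ i, c i • v i‖ ^ 2 = ∑ i, c i ^ 2 := by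
  rw [← real_inner_self_eq_norm_sq, hv.inner_sum]
  simp [sq]

/-- Eckart–Young–Schmidt for symmetric positive semidefinite operators in operator
norm: for a self-adjoint operator `T` with eigenvalues `lam 0 ≥ ... ≥ lam (n-1) ≥ 0`
and rank-`m` spectral truncation `Tm`, every operator `A` of rank at most `m`
satisfies `‖T - A‖ ≥ lam m = ‖T - Tm‖`. -/
theorem eckart_young_operator_norm
    {E : Type*} [NormedAddCommGroup E] [InnerProductSpace ℝ E] [FiniteDimensional ℝ E]
    (n m : ℕ) (hmn : m < n)
    (b : OrthonormalBasis (Fin n) ℝ E)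
    (T : E →L[ℝ] E) (hT : IsSelfAdjoint T)
    (lam : Fin n → ℝ) (hlam : Antitone lam) (hnonneg : ∀ i, 0 ≤ lam i)
    (hEig : ∀ i, T (b i) = lam i • b i)
    (Tm : E →L[ℝ] E)
    (hTm : ∀ v, Tm v = ∑ i : Fin m,
      (lam (Fin.castLE hmn.le i) * (inner ℝ v (b (Fin.castLE hmn.le i)) : ℝ))
        • b (Fin.castLE hmn.le i)) :
    ∀ A : E →L[ℝ] E, Module.finrank ℝ (LinearMap.range A.toLinearMap) ≤ m →
      lam ⟨m, hmn⟩ ≤ ‖T - A‖ ∧ ‖T - Tm‖ = lam ⟨m, hmn⟩ := by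
  intro A hA
  set μ := lam ⟨m, hmn⟩ with hμ
  have hμ0 : 0 ≤ μ := hnonneg _
  have hfr : Module.finrank ℝ E = n := by
    rw [Module.finrank_eq_card_basis b.toBasis, Fintype.card_fin]
  -- expansion of T
  have hTv : ∀ v : E, T v = ∑ i : Fin n, (lam i * ⟪b i, v⟫) • b i := by
    intro v
    conv_lhs => rw [← b.sum_repr' v, map_sum]
    refine Finset.sum_congr rfl fun i _ => ?_
    rw [map_smul, hEig, smul_smul, mul_comm]
  -- key norm bound on vectors orthogonal to late basis vectors
  have key : ∀ w : E, (∀ j : Fin n, m < (j : ℕ) → ⟪b j, w⟫ = 0) → μ * ‖w‖ ≤ ‖T w‖ := by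
    intro w hw
    have h1 : ‖T w‖ ^ 2 = ∑ i : Fin n, (lam i * ⟪b i, w⟫) ^ 2 := by
      rw [hTv w]; exact ey_norm_sq b.orthonormal _
    have h2 : ‖w‖ ^ 2 = ∑ i : Fin n, ⟪b i, w⟫ ^ 2 := by
      conv_lhs => rw [← b.sum_repr' w]
      exact ey_norm_sq b.orthonormal _
    have hsq : (μ * ‖w‖) ^ 2 ≤ ‖T w‖ ^ 2 := by
      rw [mul_pow, h1, h2, Finset.mul_sum]
      refine Finset.sum_le_sum fun i _ => ?_
      by_cases hi : m < (i : ℕ)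
      · simp [hw i hi]
      · push_neg at hi
        have hle : μ ≤ lam i := hlam (by exact Fin.mk_le_of_le_val (by simpa using hi))
        rw [mul_pow]
        have : μ ^ 2 ≤ lam i ^ 2 := pow_le_pow_left₀ hμ0 hle 2
        nlinarith [sq_nonneg (⟪b i, w⟫ : ℝ)]
    have := Real.sqrt_le_sqrt hsq
    rwa [Real.sqrt_sq (by positivity), Real.sqrt_sq (norm_nonneg _)] at this
  constructor
  · -- lower bound for arbitrary A
    -- find w ≠ 0 in span of first m+1 basis vectors with A w = 0
    set W : Submodule ℝ E := Submodule.span ℝ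
      (Set.range fun i : Fin (m + 1) => b (Fin.castLE hmn i)) with hW
    have hWrank : Module.finrank ℝ W = m + 1 := by
      rw [finrank_span_eq_card]
      · simp
      · exact (b.orthonormal.comp _ (Fin.castLE_injective hmn)).linearIndependent
    set K := LinearMap.ker A.toLinearMap with hK
    have hKrank : n - m ≤ Module.finrank ℝ K := by
      have := LinearMap.finrank_range_add_finrank_ker A.toLinearMap
      rw [hfr, ← hK] at this
      omega
    have hsup : Module.finrank ℝ ↥(W ⊔ K) ≤ n := hfr ▸ Submodule.finrank_le _
    have hinf : 0 < Module.finrank ℝ ↥(W ⊓ K) := by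
      have := Submodule.finrank_sup_add_finrank_inf_eq W K
      omega
    have hne : W ⊓ K ≠ ⊥ := by
      intro h
      rw [h, finrank_bot] at hinf
      omega
    obtain ⟨w, hwmem, hw0⟩ := Submodule.exists_mem_ne_zero_of_ne_bot hne
    have hwW : w ∈ W := hwmem.1
    have hwK : A w = 0 := hwmem.2
    have horth : ∀ j : Fin n, m < (j : ℕ) → ⟪b j, w⟫ = 0 := by
      intro j hj
      refine Submodule.span_induction ?_ ?_ ?_ ?_ hwW
      · rintro x ⟨i, rfl⟩
        refine b.orthonormal.2 fun h => ?_
        have : (j : ℕ) = ((Fin.castLE hmn i : Fin n) : ℕ) := by rw [h]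
        simp at this
        omega
      · simp
      · intro x y _ _ hx hy
        rw [inner_add_right, hx, hy, add_zero]
      · intro a x _ hx
        rw [real_inner_smul_right, hx, mul_zero]
    have h1 : μ * ‖w‖ ≤ ‖T w‖ := key w horth
    have h2 : ‖T w‖ = ‖(T - A) w‖ := by
      simp [ContinuousLinearMap.sub_apply, hwK]
    have h3 : ‖(T - A) w‖ ≤ ‖T - A‖ * ‖w‖ := (T - A).le_opNorm w
    have hwpos : 0 < ‖w‖ := norm_pos_iff.mpr hw0
    have := h1.trans (h2 ▸ h3)
    exact le_of_mul_le_mul_right (by linarith) hwpos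
  · -- ‖T - Tm‖ = μ
    have hTmv : ∀ v : E, Tm v = ∑ i : Fin n,
        (if (i : ℕ) < m then lam i * ⟪b i, v⟫ else 0) • b i := by
      intro v
      rw [hTm v]
      simp only [ite_smul, zero_smul]
      rw [← Finset.sum_filter]
      refine Finset.sum_bij' (fun (i : Fin m) _ => Fin.castLE hmn.le i)
        (fun (j : Fin n) hj => ⟨(j : ℕ), by simpa using (Finset.mem_filter.mp hj).2⟩)
        ?_ ?_ ?_ ?_ ?_
      · intro a _
        simp [Fin.is_lt]
      · intro a _
        exact Finset.mem_univ _
      · intro a _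
        simp
      · intro a _
        simp
      · intro a _
        rw [real_inner_comm]
    have upper : ‖T - Tm‖ ≤ μ := by
      refine ContinuousLinearMap.opNorm_le_bound _ hμ0 fun v => ?_
      have hdiff : (T - Tm) v = ∑ i : Fin n,
          ((lam i * ⟪b i, v⟫) - (if (i : ℕ) < m then lam i * ⟪b i, v⟫ else 0)) • b i := by
        simp only [ContinuousLinearMap.sub_apply, hTv v, hTmv v, ← Finset.sum_sub_distrib,
          sub_smul]
      have h1 : ‖(T - Tm) v‖ ^ 2 = ∑ i : Fin n,
          ((lam i * ⟪b i, v⟫) - (if (i : ℕ) < m then lam i * ⟪b i, v⟫ else 0)) ^ 2 := by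
        rw [hdiff]; exact ey_norm_sq b.orthonormal _
      have h2 : ‖v‖ ^ 2 = ∑ i : Fin n, ⟪b i, v⟫ ^ 2 := by
        conv_lhs => rw [← b.sum_repr' v]
        exact ey_norm_sq b.orthonormal _
      have hsq : ‖(T - Tm) v‖ ^ 2 ≤ (μ * ‖v‖) ^ 2 := by
        rw [mul_pow, h1, h2, Finset.mul_sum]
        refine Finset.sum_le_sum fun i _ => ?_
        by_cases hi : (i : ℕ) < m
        · simp only [if_pos hi, sub_self, ne_eq, OfNat.ofNat_ne_zero, not_false_eq_true,
            zero_pow]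
          positivity
        · simp only [hi, if_neg, if_false, sub_zero, mul_pow]
          have hle : lam i ≤ μ := hlam (by exact Fin.mk_le_of_le_val (by omega))
          have : lam i ^ 2 ≤ μ ^ 2 := pow_le_pow_left₀ (hnonneg i) hle 2
          nlinarith [sq_nonneg (⟪b i, v⟫ : ℝ)]
      have := Real.sqrt_le_sqrt hsq
      rwa [Real.sqrt_sq (norm_nonneg _), Real.sqrt_sq (by positivity)] at this
    have lower : μ ≤ ‖T - Tm‖ := by
      have hbm : (T - Tm) (b ⟨m, hmn⟩) = μ • b ⟨m, hmn⟩ := by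
        have hz : Tm (b ⟨m, hmn⟩) = 0 := by
          rw [hTm]
          refine Finset.sum_eq_zero fun i _ => ?_
          have : (inner ℝ (b ⟨m, hmn⟩) (b (Fin.castLE hmn.le i)) : ℝ) = 0 := by
            refine b.orthonormal.2 fun h => ?_
            have : (m : ℕ) = ((Fin.castLE hmn.le i : Fin n) : ℕ) := congrArg Fin.val h
            simp at this
            omega
          simp [this]
        rw [ContinuousLinearMap.sub_apply, hz, hEig, sub_zero]
      have h1 : ‖(T - Tm) (b ⟨m, hmn⟩)‖ = μ := by
        rw [hbm, norm_smul, b.orthonormal.1]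
        simp [abs_of_nonneg hμ0]
      have h2 := (T - Tm).le_opNorm (b ⟨m, hmn⟩)
      rw [h1, b.orthonormal.1, mul_one] at h2
      exact h2
    exact le_antisymm upper lower
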